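/- Let P, Q : ℤ_2 → ℤ_2 be 1-Lipschitz functions satisfying, for all y ∈ ℤ_2: P(2y) = 1 + 2·P(y), P(1 + 2y) = 2·Q(y), Q(2y) = 2·P(y), and Q(1 + 2y) = 1 + 2·Q(y) (the standard automaton generators of the lamplighter group). Then the reduced van der Put coefficients of P satisfy b^P_0 = −1, b^P_1 = −4, b^P_2 = −3, b^P_3 = −1; for every n ≥ 0, b^P_n ∈ {−1, −3, −4} (as elements of ℤ_2); and the 2-kernel of the sequence n ↦ b^P_n contains at most 8 distinct sequences (in particular this sequence is 2-automatic). -/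

import Mathlib

/-- The van der Put coefficients of `f : ℤ_2 → ℤ_2`:
`B^f_n = f(n)` for `n < 2` and `B^f_n = f(n) - f(n mod 2^⌊log_2 n⌋)` for `n ≥ 2`. -/
noncomputable def vdpB2 (f : PadicInt 2 → PadicInt 2) (n : ℕ) : PadicInt 2 :=
  if n < 2 then f n else f n - f ((n % 2 ^ Nat.log 2 n : ℕ))

/-- The `2`-kernel of a sequence `a : ℕ → A`: all sequences `n ↦ a (j + n·2^i)` with
`i ≥ 0` and `0 ≤ j < 2^i`. -/
def twoKernel {A : Type*} (a : ℕ → A) : Set (ℕ → A) :=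
  {s | ∃ i j : ℕ, j < 2 ^ i ∧ s = fun n => a (j + n * 2 ^ i)}

/-- The "second binary digit" indicator function of the statement. -/
noncomputable def gfun (n : ℕ) : PadicInt 2 :=
  if n / 2 ^ (Nat.log 2 n - 1) % 2 = 0 then -3 else -1

lemma gfun_mem (n : ℕ) : gfun n = -3 ∨ gfun n = -1 := by
  unfold gfun; split <;> simp

lemma log_add_mul_pow {i j n : ℕ} (hn : 1 ≤ n) (hj : j < 2 ^ i) :
    Nat.log 2 (j + n * 2 ^ i) = Nat.log 2 n + i := by
  apply Nat.log_eq_of_pow_le_of_lt_pow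
  · calc 2 ^ (Nat.log 2 n + i) = 2 ^ Nat.log 2 n * 2 ^ i := pow_add 2 _ _
    _ ≤ n * 2 ^ i := Nat.mul_le_mul_right _ (Nat.pow_log_le_self 2 (by omega))
    _ ≤ j + n * 2 ^ i := by omega
  · have h1 : n < 2 ^ (Nat.log 2 n + 1) := Nat.lt_pow_succ_log_self (by norm_num) n
    calc j + n * 2 ^ i < (n + 1) * 2 ^ i := by nlinarith [Nat.two_pow_pos i]
    _ ≤ 2 ^ (Nat.log 2 n + 1) * 2 ^ i := Nat.mul_le_mul_right _ (by omega)
    _ = 2 ^ (Nat.log 2 n + i + 1) := by rw [← pow_add]; ring_nf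

lemma div_add_mul_pow {i j n : ℕ} (hj : j < 2 ^ i) : (j + n * 2 ^ i) / 2 ^ i = n := by
  rw [Nat.add_mul_div_right _ _ (Nat.two_pow_pos i), Nat.div_eq_of_lt hj]
  omega

lemma gfun_shift {i j n : ℕ} (hi : 1 ≤ i) (hn : 2 ≤ n) (hj : j < 2 ^ i) :
    gfun (j + n * 2 ^ i) = gfun n := by
  have hk : 1 ≤ Nat.log 2 n := Nat.le_log_of_pow_le (by norm_num) (by omega)
  unfold gfun
  rw [log_add_mul_pow (by omega) hj]
  have h1 : Nat.log 2 n + i - 1 = i + (Nat.log 2 n - 1) := by omega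
  rw [h1, pow_add, ← Nat.div_div_eq_div_mul, div_add_mul_pow hj]

/-- The candidate kernel elements. -/
noncomputable def cfun (a b : PadicInt 2) : ℕ → PadicInt 2 :=
  fun n => if n = 0 then a else if n = 1 then b else gfun n

lemma cfun_zero (a b : PadicInt 2) : cfun a b 0 = a := rfl
lemma cfun_one (a b : PadicInt 2) : cfun a b 1 = b := rfl
lemma cfun_ge (a b : PadicInt 2) (n : ℕ) : cfun a b (n + 2) = gfun (n + 2) := rfl

lemma ncard_insert_le' {α : Type*} (a : α) (s : Set α) (k : ℕ) (h : s.ncard ≤ k) :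
    (insert a s).ncard ≤ k + 1 :=
  le_trans (Set.ncard_insert_le a s) (by omega)

theorem lamplighter_reduced_vanDerPut (P Q : PadicInt 2 → PadicInt 2)
    (hP : ∀ x y : PadicInt 2, ‖P x - P y‖ ≤ ‖x - y‖)
    (hQ : ∀ x y : PadicInt 2, ‖Q x - Q y‖ ≤ ‖x - y‖)
    (hP0 : ∀ y : PadicInt 2, P (2 * y) = 1 + 2 * P y)
    (hP1 : ∀ y : PadicInt 2, P (1 + 2 * y) = 2 * Q y)
    (hQ0 : ∀ y : PadicInt 2, Q (2 * y) = 2 * P y)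
    (hQ1 : ∀ y : PadicInt 2, Q (1 + 2 * y) = 1 + 2 * Q y)
    -- `bP` is the sequence of reduced van der Put coefficients of `P`
    (bP : ℕ → PadicInt 2)
    (hbP : ∀ n : ℕ, (2 : PadicInt 2) ^ Nat.log 2 n * bP n = vdpB2 P n) :
    bP 0 = -1 ∧ bP 1 = -4 ∧ bP 2 = -3 ∧ bP 3 = -1 ∧
    (∀ n : ℕ, bP n ∈ ({-1, -3, -4} : Set (PadicInt 2))) ∧
    (twoKernel bP).Finite ∧ (twoKernel bP).ncard ≤ 8 := by
  -- cast versions of the recursions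
  have hPe : ∀ m : ℕ, P ((2 * m : ℕ) : PadicInt 2) = 1 + 2 * P m := by
    intro m; rw [show ((2 * m : ℕ) : PadicInt 2) = 2 * (m : PadicInt 2) by push_cast; ring, hP0]
  have hPo : ∀ m : ℕ, P ((2 * m + 1 : ℕ) : PadicInt 2) = 2 * Q m := by
    intro m; rw [show ((2 * m + 1 : ℕ) : PadicInt 2) = 1 + 2 * (m : PadicInt 2) by push_cast; ring, hP1]
  have hQe : ∀ m : ℕ, Q ((2 * m : ℕ) : PadicInt 2) = 2 * P m := by
    intro m; rw [show ((2 * m : ℕ) : PadicInt 2) = 2 * (m : PadicInt 2) by push_cast; ring, hQ0]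
  have hQo : ∀ m : ℕ, Q ((2 * m + 1 : ℕ) : PadicInt 2) = 1 + 2 * Q m := by
    intro m; rw [show ((2 * m + 1 : ℕ) : PadicInt 2) = 1 + 2 * (m : PadicInt 2) by push_cast; ring, hQ1]
  -- small values
  have hp0 : P 0 = -1 := by
    have h := hP0 0; rw [mul_zero] at h; linear_combination -h
  have hq0 : Q 0 = -2 := by have h := hQ0 0; rw [mul_zero] at h; rw [h, hp0]; ring
  have hp1 : P 1 = -4 := by
    have h := hP1 0; rw [mul_zero, add_zero] at h; rw [h, hq0]; ring
  have hq1 : Q 1 = -3 := by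
    have h := hQ1 0; rw [mul_zero, add_zero] at h; rw [h, hq0]; ring
  have hp2 : P 2 = -7 := by
    have h := hP0 1; rw [mul_one] at h; rw [h, hp1]; ring
  have hq2 : Q 2 = -8 := by
    have h := hQ0 1; rw [mul_one] at h; rw [h, hp1]; ring
  have hp3 : P 3 = -6 := by
    have h := hP1 1; rw [mul_one, show (1 : PadicInt 2) + 2 = 3 by ring] at h
    rw [h, hq1]; ring
  have hq3 : Q 3 = -5 := by
    have h := hQ1 1; rw [mul_one, show (1 : PadicInt 2) + 2 = 3 by ring] at h
    rw [h, hq1]; ring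
  have hlog2 : Nat.log 2 2 = 1 := Nat.log_eq_of_pow_le_of_lt_pow (by norm_num) (by norm_num)
  have hlog3 : Nat.log 2 3 = 1 := Nat.log_eq_of_pow_le_of_lt_pow (by norm_num) (by norm_num)
  have hg2 : gfun 2 = -3 := by unfold gfun; rw [hlog2]; norm_num
  have hg3 : gfun 3 = -1 := by unfold gfun; rw [hlog3]; norm_num
  -- the key induction
  have key : ∀ n : ℕ, 2 ≤ n →
      vdpB2 P n = 2 ^ Nat.log 2 n * gfun n ∧ vdpB2 Q n = 2 ^ Nat.log 2 n * gfun n := by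
    intro n
    induction n using Nat.strong_induction_on with
    | _ n ih =>
      intro hn
      rcases lt_or_ge n 4 with h4 | h4
      · interval_cases n
        · constructor
          · rw [vdpB2, if_neg (by norm_num), hlog2]
            norm_num [hp2, hp0, hg2]
          · rw [vdpB2, if_neg (by norm_num), hlog2]
            norm_num [hq2, hq0, hg2]
        · constructor
          · rw [vdpB2, if_neg (by norm_num), hlog3]
            norm_num [hp3, hp1, hg3]
          · rw [vdpB2, if_neg (by norm_num), hlog3]
            norm_num [hq3, hq1, hg3]
      · -- n ≥ 4
        set m := n / 2 with hm
        have hm2 : 2 ≤ m := by omega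
        have hmn : m < n := by omega
        obtain ⟨hBPm, hBQm⟩ := ih m hmn hm2
        have hk : 1 ≤ Nat.log 2 m := Nat.le_log_of_pow_le (by norm_num) (by omega)
        have hmodlt : m % 2 ^ Nat.log 2 m < m := by
          have := Nat.pow_log_le_self 2 (show m ≠ 0 by omega)
          exact Nat.mod_lt _ (by positivity) |>.trans_le this
        rcases Nat.even_or_odd n with ⟨t, ht⟩ | ⟨t, ht⟩
        · -- n = 2 * m
          have hne : n = 2 * m := by omega
          have hlog : Nat.log 2 n = Nat.log 2 m + 1 := by
            rw [hne, show 2 * m = 0 + m * 2 ^ 1 by ring, log_add_mul_pow (by omega) (by norm_num)]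
          have hmod : n % 2 ^ Nat.log 2 n = 2 * (m % 2 ^ Nat.log 2 m) := by
            rw [hlog, hne, pow_succ, show 2 ^ Nat.log 2 m * 2 = 2 * 2 ^ Nat.log 2 m by ring,
              Nat.mul_mod_mul_left]
          have hgn : gfun n = gfun m := by
            rw [hne, show 2 * m = 0 + m * 2 ^ 1 by ring]
            exact gfun_shift le_rfl hm2 (by norm_num)
          have hBP : vdpB2 P n = 2 * vdpB2 P m := by
            rw [vdpB2, if_neg (by omega), vdpB2, if_neg (by omega), hmod, hne, hPe,
              hPe (m % 2 ^ Nat.log 2 m)]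
            ring
          have hBQ : vdpB2 Q n = 2 * vdpB2 P m := by
            rw [vdpB2, if_neg (by omega), vdpB2, if_neg (by omega), hmod, hne, hQe,
              hQe (m % 2 ^ Nat.log 2 m)]
            ring
          rw [hBP, hBQ, hBPm, hgn, hlog, pow_succ]
          constructor <;> ring
        · -- n = 2 * m + 1
          have hne : n = 2 * m + 1 := by omega
          have hlog : Nat.log 2 n = Nat.log 2 m + 1 := by
            rw [hne, show 2 * m + 1 = 1 + m * 2 ^ 1 by ring,
              log_add_mul_pow (by omega) (by norm_num)]
          have hmod : n % 2 ^ Nat.log 2 n = 2 * (m % 2 ^ Nat.log 2 m) + 1 := by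
            rw [hlog, hne, pow_succ]
            have h1 : 2 * m + 1 = (2 * (m % 2 ^ Nat.log 2 m) + 1) +
                (m / 2 ^ Nat.log 2 m) * (2 ^ Nat.log 2 m * 2) := by
              conv_lhs => rw [← Nat.div_add_mod m (2 ^ Nat.log 2 m)]
              ring
            rw [h1, Nat.add_mul_mod_self_right, Nat.mod_eq_of_lt]
            have : m % 2 ^ Nat.log 2 m < 2 ^ Nat.log 2 m :=
              Nat.mod_lt _ (by positivity)
            omega
          have hgn : gfun n = gfun m := by
            rw [hne, show 2 * m + 1 = 1 + m * 2 ^ 1 by ring]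
            exact gfun_shift le_rfl hm2 (by norm_num)
          have hBP : vdpB2 P n = 2 * vdpB2 Q m := by
            rw [vdpB2, if_neg (by omega), vdpB2, if_neg (by omega), hmod, hne, hPo,
              hPo (m % 2 ^ Nat.log 2 m)]
            ring
          have hBQ : vdpB2 Q n = 2 * vdpB2 Q m := by
            rw [vdpB2, if_neg (by omega), vdpB2, if_neg (by omega), hmod, hne, hQo,
              hQo (m % 2 ^ Nat.log 2 m)]
            ring
          rw [hBP, hBQ, hBQm, hgn, hlog, pow_succ]
          constructor <;> ring
  have h2z : (2 : PadicInt 2) ≠ 0 := by norm_num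
  -- bP n = gfun n for n ≥ 2
  have bval : ∀ n : ℕ, 2 ≤ n → bP n = gfun n := by
    intro n hn
    have h := hbP n
    rw [(key n hn).1] at h
    exact mul_left_cancel₀ (pow_ne_zero _ h2z) h
  have hb0 : bP 0 = -1 := by
    have h := hbP 0
    rw [vdpB2, if_pos (by norm_num)] at h
    simpa [hp0] using h
  have hb1 : bP 1 = -4 := by
    have h := hbP 1
    rw [vdpB2, if_pos (by norm_num)] at h
    simpa [hp1] using h
  have hb2 : bP 2 = -3 := by rw [bval 2 le_rfl, hg2]
  have hb3 : bP 3 = -1 := by rw [bval 3 (by norm_num), hg3]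
  have hmem : ∀ n : ℕ, bP n ∈ ({-1, -3, -4} : Set (PadicInt 2)) := by
    intro n
    match n with
    | 0 => rw [hb0]; simp
    | 1 => rw [hb1]; simp
    | (n+2) =>
      rw [bval (n+2) (by omega)]
      rcases gfun_mem (n+2) with h | h <;> rw [h] <;> simp
  set S : Set (ℕ → PadicInt 2) :=
    {bP, cfun (-1) (-3), cfun (-1) (-1), cfun (-4) (-3), cfun (-4) (-1),
      cfun (-3) (-3), cfun (-3) (-1)} with hS
  have hsub : twoKernel bP ⊆ S := by
    rintro s ⟨i, j, hj, rfl⟩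
    rcases Nat.eq_zero_or_pos i with hi | hi
    · subst hi
      have hj0 : j = 0 := by simpa using hj
      subst hj0
      have he : (fun n => bP (0 + n * 2 ^ 0)) = bP := by funext n; simp
      rw [he]
      exact Set.mem_insert _ _
    · have h2i : 2 ≤ 2 ^ i := by
        calc 2 = 2 ^ 1 := (pow_one 2).symm
        _ ≤ 2 ^ i := Nat.pow_le_pow_right (by norm_num) hi
      have hfun : (fun n => bP (j + n * 2 ^ i)) = cfun (bP j) (bP (2 ^ i + j)) := by
        funext n
        match n with
        | 0 => rw [cfun_zero]; simp
        | 1 => rw [cfun_one, show j + 1 * 2 ^ i = 2 ^ i + j by ring]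
        | (n+2) =>
          rw [cfun_ge, bval _ (by nlinarith), gfun_shift hi (by omega) hj]
      rw [hfun]
      have ha : bP j = -1 ∨ bP j = -4 ∨ bP j = -3 := by
        match j with
        | 0 => exact Or.inl hb0
        | 1 => exact Or.inr (Or.inl hb1)
        | (j+2) =>
          rw [bval _ (by omega)]
          rcases gfun_mem (j+2) with h | h <;> rw [h] <;> tauto
      have hbb : bP (2 ^ i + j) = -3 ∨ bP (2 ^ i + j) = -1 := by
        rw [bval _ (by omega)]
        exact gfun_mem _
      rcases ha with h | h | h <;> rcases hbb with h' | h' <;> rw [h, h'] <;>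
        simp only [hS, Set.mem_insert_iff, Set.mem_singleton_iff] <;> tauto
  have hSfin : S.Finite := by
    rw [hS]
    exact (((((((Set.finite_singleton _).insert _).insert _).insert _).insert _).insert
      _).insert _)
  have h7 : S.ncard ≤ 7 := by
    rw [hS]
    exact ncard_insert_le' _ _ _ (ncard_insert_le' _ _ _ (ncard_insert_le' _ _ _
      (ncard_insert_le' _ _ _ (ncard_insert_le' _ _ _ (ncard_insert_le' _ _ _
        (le_of_eq (Set.ncard_singleton _)))))))
  refine ⟨hb0, hb1, hb2, hb3, hmem, hSfin.subset hsub, ?_⟩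
  exact le_trans (Set.ncard_le_ncard hsub hSfin) (le_trans h7 (by norm_num))
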